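/- Resolvent-convolution identity (equation (4.16) in the proof of the main theorem): let u ∈ D(A) and v = Au, and let λ > 0. Let ν be a Borel measure on (0,∞) with ∫₀^∞ min(1,t) ν(dt) < ∞ and tail ν̄(t) := ν((t,∞)), and let U be a Borel measure on [0,∞) satisfying ∫_{[0,w]} ν̄(w−h) U(dh) = 1 for every w > 0. Then ∫_{[0,∞)} e^{−λh} U(dh) < ∞, the iterated Bochner integral ∫_{[0,∞)} ∫₀^∞ e^{−λ(h+t)} T_{t+h}(v − λu) ν̄(t) dt U(dh) converges absolutely, and it equals −u. -/

import Mathlib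

open MeasureTheory Set Filter Topology

open scoped ENNReal NNReal



private lemma sg_cont {X : Type*} [NormedAddCommGroup X] [NormedSpace ℝ X]
    (T : ℝ → X →L[ℝ] X)
    (hTsg : ∀ s t : ℝ, 0 ≤ s → 0 ≤ t → T (s + t) = (T s).comp (T t))
    (hTcon : ∀ t : ℝ, 0 ≤ t → ∀ f : X, ‖T t f‖ ≤ ‖f‖)
    (hTsc : ∀ f : X, Tendsto (fun t => T t f) (𝓝[≥] (0 : ℝ)) (𝓝 f))
    (x : X) : ContinuousOn (fun s => T s x) (Ici 0) := by
  intro s hs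
  have hs' : (0:ℝ) ≤ s := hs
  have hsub : Ici (0:ℝ) ⊆ Icc 0 s ∪ Ici s := by
    intro y hy
    rcases le_total y s with h | h
    · exact Or.inl ⟨hy, h⟩
    · exact Or.inr h
  refine ContinuousWithinAt.mono (ContinuousWithinAt.union ?_ ?_) hsub
  · -- left-continuity on Icc 0 s
    rw [ContinuousWithinAt, tendsto_iff_norm_sub_tendsto_zero]
    have h1 : Tendsto (fun r : ℝ => s - r) (𝓝[Icc 0 s] s) (𝓝[≥] 0) := by
      apply tendsto_nhdsWithin_of_tendsto_nhds_of_eventually_within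
      · have h : Tendsto (fun r : ℝ => s - r) (𝓝 s) (𝓝 (s - s)) :=
          (continuous_const.sub continuous_id).tendsto s
        rw [sub_self] at h
        exact h.mono_left nhdsWithin_le_nhds
      · filter_upwards [self_mem_nhdsWithin] with r hr
        exact sub_nonneg.2 hr.2
    have h2 : Tendsto (fun r : ℝ => T (s - r) x) (𝓝[Icc 0 s] s) (𝓝 x) := (hTsc x).comp h1
    have hb : Tendsto (fun r : ℝ => ‖x - T (s - r) x‖) (𝓝[Icc 0 s] s) (𝓝 0) := by
      have h3 : Tendsto (fun r : ℝ => x - T (s - r) x) (𝓝[Icc 0 s] s) (𝓝 (x - x)) :=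
        tendsto_const_nhds.sub h2
      rw [sub_self] at h3
      simpa using h3.norm
    apply squeeze_zero' (by filter_upwards with r using norm_nonneg _) ?_ hb
    filter_upwards [self_mem_nhdsWithin] with r hr
    have h0r : (0:ℝ) ≤ r := hr.1
    have hrs : r ≤ s := hr.2
    have heq : T s x = T r (T (s - r) x) := by
      have h := hTsg r (s - r) h0r (by linarith)
      rw [show r + (s - r) = s by ring] at h
      rw [h]; rfl
    calc ‖T r x - T s x‖ = ‖T r (x - T (s - r) x)‖ := by rw [heq, map_sub]
      _ ≤ ‖x - T (s - r) x‖ := hTcon r h0r _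
  · -- right-continuity on Ici s
    rw [ContinuousWithinAt]
    have h1 : Tendsto (fun r : ℝ => r - s) (𝓝[Ici s] s) (𝓝[≥] 0) := by
      apply tendsto_nhdsWithin_of_tendsto_nhds_of_eventually_within
      · have h : Tendsto (fun r : ℝ => r - s) (𝓝 s) (𝓝 (s - s)) :=
          (continuous_id.sub continuous_const).tendsto s
        rw [sub_self] at h
        exact h.mono_left nhdsWithin_le_nhds
      · filter_upwards [self_mem_nhdsWithin] with r hr
        exact sub_nonneg.2 (mem_Ici.1 hr)
    have h2 : Tendsto (fun r : ℝ => T s (T (r - s) x)) (𝓝[Ici s] s) (𝓝 (T s x)) :=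
      ((T s).continuous.tendsto x).comp ((hTsc x).comp h1)
    refine h2.congr' ?_
    filter_upwards [self_mem_nhdsWithin] with r hr
    have h := hTsg s (r - s) hs' (sub_nonneg.2 hr)
    rw [show s + (r - s) = r by ring] at h
    rw [h]; rfl

private lemma sg_deriv {X : Type*} [NormedAddCommGroup X] [NormedSpace ℝ X]
    (T : ℝ → X →L[ℝ] X)
    (hTsg : ∀ s t : ℝ, 0 ≤ s → 0 ≤ t → T (s + t) = (T s).comp (T t))
    (u v : X)
    (hu : Tendsto (fun h : ℝ => h⁻¹ • (T h u - u)) (𝓝[>] (0 : ℝ)) (𝓝 v))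
    {s : ℝ} (hs : 0 ≤ s) :
    HasDerivWithinAt (fun r => T r u) (T s v) (Ioi s) s := by
  rw [hasDerivWithinAt_iff_tendsto_slope]
  have hset : Ioi s \ {s} = Ioi s := Set.diff_singleton_eq_self (fun h => lt_irrefl s h)
  rw [hset]
  have h1 : Tendsto (fun r : ℝ => r - s) (𝓝[Ioi s] s) (𝓝[>] 0) := by
    apply tendsto_nhdsWithin_of_tendsto_nhds_of_eventually_within
    · have h : Tendsto (fun r : ℝ => r - s) (𝓝 s) (𝓝 (s - s)) :=
        (continuous_id.sub continuous_const).tendsto s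
      rw [sub_self] at h
      exact h.mono_left nhdsWithin_le_nhds
    · filter_upwards [self_mem_nhdsWithin] with r hr
      exact sub_pos.2 (mem_Ioi.1 hr)
  have h2 : Tendsto (fun r : ℝ => T s ((r - s)⁻¹ • (T (r - s) u - u))) (𝓝[Ioi s] s)
      (𝓝 (T s v)) := ((T s).continuous.tendsto v).comp (hu.comp h1)
  refine h2.congr' ?_
  filter_upwards [self_mem_nhdsWithin] with r hr
  have h := hTsg s (r - s) hs (sub_pos.2 hr).le
  rw [show s + (r - s) = r by ring] at h
  rw [slope_def_module, h]
  simp [ContinuousLinearMap.comp_apply, smul_sub]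

private lemma sg_exp_int {l : ℝ} (hl : 0 < l) (a : ℝ) :
    IntegrableOn (fun s : ℝ => Real.exp (-(l * s))) (Ioi a) volume := by
  simpa [neg_mul] using exp_neg_integrableOn_Ioi a hl

private lemma sg_resolvent_int {X : Type*} [NormedAddCommGroup X] [NormedSpace ℝ X]
    (T : ℝ → X →L[ℝ] X)
    (hTsg : ∀ s t : ℝ, 0 ≤ s → 0 ≤ t → T (s + t) = (T s).comp (T t))
    (hTcon : ∀ t : ℝ, 0 ≤ t → ∀ f : X, ‖T t f‖ ≤ ‖f‖)
    (hTsc : ∀ f : X, Tendsto (fun t => T t f) (𝓝[≥] (0 : ℝ)) (𝓝 f))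
    (x : X) {l : ℝ} (hl : 0 < l) :
    IntegrableOn (fun s : ℝ => Real.exp (-(l * s)) • T s x) (Ioi 0) volume := by
  have hC : Continuous (fun s : ℝ => T (max s 0) x) :=
    (sg_cont T hTsg hTcon hTsc x).comp_continuous (continuous_id.max continuous_const)
      (fun s => mem_Ici.2 (le_max_right _ _))
  have hfm : AEStronglyMeasurable (fun s : ℝ => Real.exp (-(l * s)) • T s x)
      (volume.restrict (Ioi 0)) := by
    have hcont : Continuous (fun s : ℝ => Real.exp (-(l * s)) • T (max s 0) x) :=
      ((Real.continuous_exp.comp (continuous_const.mul continuous_id).neg)).smul hC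
    refine hcont.aestronglyMeasurable.congr ?_
    filter_upwards [ae_restrict_mem measurableSet_Ioi] with s hs
    rw [max_eq_left (le_of_lt hs)]
  refine Integrable.mono' ((sg_exp_int hl 0).mul_const ‖x‖) hfm ?_
  filter_upwards [ae_restrict_mem measurableSet_Ioi] with s hs
  rw [norm_smul, Real.norm_eq_abs, abs_of_pos (Real.exp_pos _)]
  exact mul_le_mul_of_nonneg_left (hTcon s hs.le x) (Real.exp_pos _).le

private lemma sg_resolvent {X : Type*} [NormedAddCommGroup X] [NormedSpace ℝ X] [CompleteSpace X]
    (T : ℝ → X →L[ℝ] X)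
    (hT0 : T 0 = ContinuousLinearMap.id ℝ X)
    (hTsg : ∀ s t : ℝ, 0 ≤ s → 0 ≤ t → T (s + t) = (T s).comp (T t))
    (hTcon : ∀ t : ℝ, 0 ≤ t → ∀ f : X, ‖T t f‖ ≤ ‖f‖)
    (hTsc : ∀ f : X, Tendsto (fun t => T t f) (𝓝[≥] (0 : ℝ)) (𝓝 f))
    (u v : X)
    (hu : Tendsto (fun h : ℝ => h⁻¹ • (T h u - u)) (𝓝[>] (0 : ℝ)) (𝓝 v))
    {l : ℝ} (hl : 0 < l) :
    (∫ s in Ioi (0:ℝ), Real.exp (-(l * s)) • T s (v - l • u)) = -u := by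
  set x := v - l • u with hx
  have hfi : IntegrableOn (fun s : ℝ => Real.exp (-(l * s)) • T s x) (Ioi 0) volume :=
    sg_resolvent_int T hTsg hTcon hTsc x hl
  have key : ∀ b : ℝ, 0 ≤ b →
      (∫ s in (0:ℝ)..b, Real.exp (-(l * s)) • T s x) = Real.exp (-(l * b)) • T b u - u := by
    intro b hb
    have hcont : ContinuousOn (fun s : ℝ => Real.exp (-(l * s)) • T s u) (Icc 0 b) := by
      apply ContinuousOn.smul
      · exact (Real.continuous_exp.comp (continuous_const.mul continuous_id).neg).continuousOn
      · exact (sg_cont T hTsg hTcon hTsc u).mono Icc_subset_Ici_self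
    have hderiv : ∀ s ∈ Ioo 0 b, HasDerivWithinAt (fun r : ℝ => Real.exp (-(l * r)) • T r u)
        (Real.exp (-(l * s)) • T s x) (Ioi s) s := by
      intro s hs
      have hd1 : HasDerivWithinAt (fun r : ℝ => Real.exp (-(l * r)))
          (Real.exp (-(l * s)) * (-l)) (Ioi s) s := by
        have h1 : HasDerivAt (fun r : ℝ => -(l * r)) (-l) s := by
          exact ((hasDerivAt_id s).const_mul l).neg.congr_deriv (by simp)
        exact ((Real.hasDerivAt_exp (-(l * s))).comp s h1).hasDerivWithinAt
      have hd2 := sg_deriv T hTsg u v hu hs.1.le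
      have h3 := hd1.smul hd2
      convert h3 using 1
      · rfl
      rw [hx, (T s).map_sub, (T s).map_smul]
      module
    have hii : IntervalIntegrable (fun s : ℝ => Real.exp (-(l * s)) • T s x) volume 0 b := by
      rw [intervalIntegrable_iff_integrableOn_Ioc_of_le hb]
      exact hfi.mono_set Ioc_subset_Ioi_self
    have h := intervalIntegral.integral_eq_sub_of_hasDeriv_right_of_le hb hcont hderiv hii
    rw [h, hT0]
    simp
  have h1 : Tendsto (fun b : ℝ => ∫ s in (0:ℝ)..b, Real.exp (-(l * s)) • T s x) atTop
      (𝓝 (∫ s in Ioi (0:ℝ), Real.exp (-(l * s)) • T s x)) :=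
    intervalIntegral_tendsto_integral_Ioi 0 hfi tendsto_id
  have h2 : Tendsto (fun b : ℝ => Real.exp (-(l * b)) • T b u - u) atTop (𝓝 (0 - u)) := by
    refine Tendsto.sub ?_ tendsto_const_nhds
    have hg : Tendsto (fun b : ℝ => Real.exp (-(l * b)) * ‖u‖) atTop (𝓝 0) := by
      have he : Tendsto (fun b : ℝ => Real.exp (-(l * b))) atTop (𝓝 0) := by
        have hlb : Tendsto (fun b : ℝ => l * b) atTop atTop := by
          simpa using tendsto_id.const_mul_atTop hl
        exact Real.tendsto_exp_neg_atTop_nhds_zero.comp hlb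
      simpa using he.mul_const ‖u‖
    apply squeeze_zero_norm' ?_ hg
    filter_upwards [eventually_ge_atTop (0:ℝ)] with b hb
    rw [norm_smul, Real.norm_eq_abs, abs_of_pos (Real.exp_pos _)]
    exact mul_le_mul_of_nonneg_left (hTcon b hb u) (Real.exp_pos _).le
  have h1' : Tendsto (fun b : ℝ => ∫ s in (0:ℝ)..b, Real.exp (-(l * s)) • T s x) atTop
      (𝓝 (0 - u)) := by
    refine h2.congr' ?_
    filter_upwards [eventually_ge_atTop (0:ℝ)] with b hb
    exact (key b hb).symm
  have := tendsto_nhds_unique h1 h1'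
  rw [this, zero_sub]

private lemma sg_exp_fin {l : ℝ} (hl : 0 < l) (a : ℝ) :
    ∫⁻ s in Ioi a, ENNReal.ofReal (Real.exp (-(l * s))) ∂volume < ⊤ := by
  have h1 := (exp_neg_integrableOn_Ioi a hl).2
  rw [hasFiniteIntegral_iff_norm] at h1
  convert h1 using 1
  refine lintegral_congr fun s => ?_
  rw [Real.norm_eq_abs, abs_of_pos (Real.exp_pos _), neg_mul]


set_option maxHeartbeats 1000000 in
/-- Resolvent-convolution identity (equation (4.16)): for a strongly continuous contraction
semigroup `T` with generator `A`, `u ∈ D(A)`, `v = Au`, `λ > 0`, a Lévy measure `ν` with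
tail `ν̄` and a measure `U` satisfying the renewal identity `∫_{[0,w]} ν̄(w-h) U(dh) = 1`,
one has `∫ e^{-λh} U(dh) < ∞` and
`∫_{[0,∞)} ∫₀^∞ e^{-λ(h+t)} T_{t+h}(v - λu) ν̄(t) dt U(dh) = -u`,
the iterated Bochner integral converging absolutely. -/
theorem resolvent_convolution_identity
    {X : Type*} [NormedAddCommGroup X] [NormedSpace ℝ X] [CompleteSpace X]
    (T : ℝ → X →L[ℝ] X)
    (hT0 : T 0 = ContinuousLinearMap.id ℝ X)
    (hTsg : ∀ s t : ℝ, 0 ≤ s → 0 ≤ t → T (s + t) = (T s).comp (T t))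
    (hTcon : ∀ t : ℝ, 0 ≤ t → ∀ f : X, ‖T t f‖ ≤ ‖f‖)
    (hTsc : ∀ f : X, Tendsto (fun t => T t f) (𝓝[≥] (0 : ℝ)) (𝓝 f))
    (u v : X)
    (hu : Tendsto (fun h : ℝ => h⁻¹ • (T h u - u)) (𝓝[>] (0 : ℝ)) (𝓝 v))
    (l : ℝ) (hl : 0 < l)
    (ν : Measure ℝ)
    (hν1 : ∫⁻ s in Set.Ioi (0 : ℝ), ENNReal.ofReal (min 1 s) ∂ν ≠ ⊤)
    (U : Measure ℝ)
    (hrenew : ∀ w : ℝ, 0 < w → ∫⁻ h in Set.Icc 0 w, ν (Set.Ioi (w - h)) ∂U = 1) :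
    (∫⁻ h in Set.Ici (0 : ℝ), ENNReal.ofReal (Real.exp (-(l * h))) ∂U ≠ ⊤) ∧
    (∀ h : ℝ, 0 ≤ h →
      IntegrableOn
        (fun t : ℝ =>
          (Real.exp (-(l * (h + t))) * (ν (Set.Ioi t)).toReal) • (T (t + h)) (v - l • u))
        (Set.Ioi 0) volume) ∧
    IntegrableOn
      (fun h : ℝ => ∫ t in Set.Ioi (0 : ℝ),
        (Real.exp (-(l * (h + t))) * (ν (Set.Ioi t)).toReal) • (T (t + h)) (v - l • u))
      (Set.Ici 0) U ∧
    ∫ h in Set.Ici (0 : ℝ),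
      (∫ t in Set.Ioi (0 : ℝ),
        (Real.exp (-(l * (h + t))) * (ν (Set.Ioi t)).toReal) • (T (t + h)) (v - l • u))
      ∂U = -u := by
  set x := v - l • u with hx
  -- measurability of the tail
  have hmeasν : Measurable (fun t : ℝ => ν (Ioi t)) :=
    Antitone.measurable (fun t1 t2 h12 => measure_mono (Ioi_subset_Ioi h12))
  -- finiteness of the tail
  have hνfin : ∀ t : ℝ, 0 < t → ν (Ioi t) ≠ ⊤ := by
    intro t ht
    have ht'0 : 0 < min t 1 := lt_min ht one_pos
    have hmono : ν (Ioi t) ≤ ν (Ioi (min t 1)) := measure_mono (Ioi_subset_Ioi (min_le_left _ _))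
    have key : ENNReal.ofReal (min t 1) * ν (Ioi (min t 1)) ≤
        ∫⁻ s in Ioi (0:ℝ), ENNReal.ofReal (min 1 s) ∂ν := by
      calc ENNReal.ofReal (min t 1) * ν (Ioi (min t 1))
          = ∫⁻ _ in Ioi (min t 1), ENNReal.ofReal (min t 1) ∂ν := (setLIntegral_const _ _).symm
        _ ≤ ∫⁻ s in Ioi (min t 1), ENNReal.ofReal (min 1 s) ∂ν := by
            refine lintegral_mono_ae ((ae_restrict_mem measurableSet_Ioi).mono fun s hs => ?_)
            exact ENNReal.ofReal_le_ofReal (le_min (min_le_right t 1) (le_of_lt hs))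
        _ ≤ ∫⁻ s in Ioi (0:ℝ), ENNReal.ofReal (min 1 s) ∂ν :=
            lintegral_mono_set (Ioi_subset_Ioi ht'0.le)
    intro hc
    have h2 : ν (Ioi (min t 1)) = ⊤ := top_le_iff.1 (hc ▸ hmono)
    rw [h2, ENNReal.mul_top (ne_of_gt (ENNReal.ofReal_pos.2 ht'0))] at key
    exact hν1 (top_le_iff.1 key)
  -- sigma-finiteness of the restricted Levy measure
  haveI hσν : SigmaFinite (ν.restrict (Ioi 0)) := by
    refine ⟨⟨⟨fun n => Iic 0 ∪ Ioi (1 / (n + 1) : ℝ), fun _ => trivial, fun n => ?_, ?_⟩⟩⟩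
    · rw [Measure.restrict_apply' measurableSet_Ioi]
      have hsub : (Iic 0 ∪ Ioi (1 / (n + 1) : ℝ)) ∩ Ioi 0 ⊆ Ioi (1 / (n + 1) : ℝ) := by
        rintro s ⟨h | h, hs2⟩
        · exact absurd (mem_Ioi.1 hs2) (not_lt.2 h)
        · exact h
      exact lt_of_le_of_lt (measure_mono hsub) (hνfin _ (by positivity)).lt_top
    · refine eq_univ_iff_forall.2 fun s => ?_
      rcases le_or_gt s 0 with h | h
      · exact mem_iUnion.2 ⟨0, Or.inl h⟩
      · obtain ⟨n, hn⟩ := exists_nat_one_div_lt h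
        exact mem_iUnion.2 ⟨n, Or.inr hn⟩
  -- a positive point of the tail
  obtain ⟨t0, ht0pos, ht0ne⟩ : ∃ t0 : ℝ, 0 < t0 ∧ ν (Ioi t0) ≠ 0 := by
    by_contra hc
    push_neg at hc
    have h0 : ν (Ioi (0:ℝ)) = 0 := by
      have hsub : Ioi (0:ℝ) ⊆ ⋃ n : ℕ, Ioi (1 / (n + 1) : ℝ) := by
        intro s hs
        obtain ⟨n, hn⟩ := exists_nat_one_div_lt (mem_Ioi.1 hs)
        exact mem_iUnion.2 ⟨n, hn⟩
      refine le_antisymm ?_ zero_le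
      calc ν (Ioi (0:ℝ)) ≤ ∑' n : ℕ, ν (Ioi (1 / (n + 1) : ℝ)) :=
            (measure_mono hsub).trans (measure_iUnion_le _)
        _ = 0 := by
            have hz : ∀ n : ℕ, ν (Ioi (1 / (n + 1) : ℝ)) = 0 := fun n => hc _ (by positivity)
            simpa [one_div] using hz
    have h1 := hrenew 1 one_pos
    have hz : ∫⁻ h in Icc (0:ℝ) 1, ν (Ioi (1 - h)) ∂U = 0 := by
      have hae : ∀ᵐ h ∂U.restrict (Icc (0:ℝ) 1), ν (Ioi (1 - h)) = 0 :=
        (ae_restrict_mem measurableSet_Icc).mono fun h hh =>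
          le_antisymm ((measure_mono (Ioi_subset_Ioi (by linarith [hh.2]))).trans h0.le) zero_le
      calc ∫⁻ h in Icc (0:ℝ) 1, ν (Ioi (1 - h)) ∂U = ∫⁻ _ in Icc (0:ℝ) 1, 0 ∂U :=
            lintegral_congr_ae hae
        _ = 0 := lintegral_zero
    rw [hz] at h1
    exact zero_ne_one h1
  -- uniform bound on U on intervals of length t0/2
  have hUIcc : ∀ a : ℝ, 0 ≤ a → U (Icc a (a + t0 / 2)) ≤ (ν (Ioi t0))⁻¹ := by
    intro a ha
    rw [ENNReal.le_inv_iff_mul_le]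
    have h1 := hrenew (a + t0) (by linarith)
    calc U (Icc a (a + t0 / 2)) * ν (Ioi t0)
        = ∫⁻ _ in Icc a (a + t0 / 2), ν (Ioi t0) ∂U := by rw [setLIntegral_const, mul_comm]
      _ ≤ ∫⁻ h in Icc a (a + t0 / 2), ν (Ioi (a + t0 - h)) ∂U := by
          refine lintegral_mono_ae ((ae_restrict_mem measurableSet_Icc).mono fun h hh => ?_)
          exact measure_mono (Ioi_subset_Ioi (by linarith [hh.1]))
      _ ≤ ∫⁻ h in Icc 0 (a + t0), ν (Ioi (a + t0 - h)) ∂U :=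
          lintegral_mono_set (Icc_subset_Icc (by linarith) (by linarith))
      _ = 1 := h1
  -- local finiteness / sigma-finiteness of the restricted renewal measure
  have hρIcc : ∀ c : ℝ, U.restrict (Ici 0) (Icc c (c + t0 / 2)) ≤ (ν (Ioi t0))⁻¹ := by
    intro c
    rw [Measure.restrict_apply' measurableSet_Ici]
    refine le_trans (measure_mono ?_) (hUIcc (max c 0) (le_max_right _ _))
    rintro y ⟨⟨hy1, hy2⟩, hy3⟩
    exact ⟨max_le hy1 hy3, by rcases max_cases c 0 with ⟨h, _⟩ | ⟨h, _⟩ <;> rw [h] <;> linarith⟩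
  haveI hρloc : IsLocallyFiniteMeasure (U.restrict (Ici 0)) := by
    refine ⟨fun a => ⟨Icc (a - t0 / 4) (a - t0 / 4 + t0 / 2), ?_, ?_⟩⟩
    · exact Icc_mem_nhds (by linarith) (by linarith)
    · exact lt_of_le_of_lt (hρIcc _) (ENNReal.inv_lt_top.2 (pos_iff_ne_zero.2 ht0ne))
  haveI hσρ : SigmaFinite (U.restrict (Ici 0)) := inferInstance
  -- Part 1 : exponential integrability of U
  have part1 : ∫⁻ h in Set.Ici (0 : ℝ), ENNReal.ofReal (Real.exp (-(l * h))) ∂U ≠ ⊤ := by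
    set δ : ℝ := t0 / 2 with hδ
    have hδpos : 0 < δ := by positivity
    have hcover : Ici (0:ℝ) ⊆ ⋃ n : ℕ, Icc (n * δ) (n * δ + δ) := by
      intro h hh
      have hh0 : (0:ℝ) ≤ h := hh
      set n := ⌊h / δ⌋₊ with hn
      have h1 : (n : ℝ) ≤ h / δ := Nat.floor_le (by positivity)
      have h2 : h / δ < n + 1 := Nat.lt_floor_add_one _
      refine mem_iUnion.2 ⟨n, ?_, ?_⟩
      · exact (le_div_iff₀ hδpos).1 h1
      · nlinarith [(div_lt_iff₀ hδpos).1 h2]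
    have hbound : ∀ n : ℕ, ∫⁻ h in Icc ((n:ℝ) * δ) ((n:ℝ) * δ + δ),
        ENNReal.ofReal (Real.exp (-(l * h))) ∂U
        ≤ ENNReal.ofReal (Real.exp (-(l * δ))) ^ n * (ν (Ioi t0))⁻¹ := by
      intro n
      calc ∫⁻ h in Icc ((n:ℝ) * δ) ((n:ℝ) * δ + δ), ENNReal.ofReal (Real.exp (-(l * h))) ∂U
          ≤ ∫⁻ _ in Icc ((n:ℝ) * δ) ((n:ℝ) * δ + δ),
              ENNReal.ofReal (Real.exp (-(l * ((n:ℝ) * δ)))) ∂U := by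
            refine lintegral_mono_ae ((ae_restrict_mem measurableSet_Icc).mono fun h hh => ?_)
            refine ENNReal.ofReal_le_ofReal (Real.exp_le_exp.2 ?_)
            have := hh.1
            nlinarith
        _ = ENNReal.ofReal (Real.exp (-(l * ((n:ℝ) * δ)))) * U (Icc ((n:ℝ) * δ) ((n:ℝ) * δ + δ)) :=
            setLIntegral_const _ _
        _ ≤ ENNReal.ofReal (Real.exp (-(l * δ))) ^ n * (ν (Ioi t0))⁻¹ := by
            refine mul_le_mul' (le_of_eq ?_) (hUIcc _ (by positivity))
            rw [show -(l * ((n:ℝ) * δ)) = (n : ℝ) * (-(l * δ)) by ring, Real.exp_nat_mul,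
              ENNReal.ofReal_pow (Real.exp_pos _).le]
    have hr1 : ENNReal.ofReal (Real.exp (-(l * δ))) < 1 := by
      rw [ENNReal.ofReal_lt_one]
      exact Real.exp_lt_one_iff.2 (by nlinarith)
    have hle : ∫⁻ h in Set.Ici (0 : ℝ), ENNReal.ofReal (Real.exp (-(l * h))) ∂U
        ≤ (1 - ENNReal.ofReal (Real.exp (-(l * δ))))⁻¹ * (ν (Ioi t0))⁻¹ := calc
      ∫⁻ h in Set.Ici (0 : ℝ), ENNReal.ofReal (Real.exp (-(l * h))) ∂U
        ≤ ∫⁻ h in ⋃ n : ℕ, Icc ((n:ℝ) * δ) ((n:ℝ) * δ + δ),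
            ENNReal.ofReal (Real.exp (-(l * h))) ∂U := lintegral_mono_set hcover
      _ ≤ ∑' n : ℕ, ∫⁻ h in Icc ((n:ℝ) * δ) ((n:ℝ) * δ + δ),
            ENNReal.ofReal (Real.exp (-(l * h))) ∂U := lintegral_iUnion_le _ _
      _ ≤ ∑' n : ℕ, ENNReal.ofReal (Real.exp (-(l * δ))) ^ n * (ν (Ioi t0))⁻¹ :=
          ENNReal.tsum_le_tsum hbound
      _ = (1 - ENNReal.ofReal (Real.exp (-(l * δ))))⁻¹ * (ν (Ioi t0))⁻¹ := by
          rw [ENNReal.tsum_mul_right, ENNReal.tsum_geometric]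
    refine ne_top_of_le_ne_top ?_ hle
    refine ENNReal.mul_ne_top (ENNReal.inv_ne_top.2 ?_) (ENNReal.inv_ne_top.2 ht0ne)
    rw [ne_eq, tsub_eq_zero_iff_le]
    exact not_le.2 hr1
  -- Tonelli: the tail is integrable near zero
  have hA : ∫⁻ t in Ioc (0:ℝ) 1, ν (Ioi t) ∂volume ≠ ⊤ := by
    have hswap : ∫⁻ t in Ioc (0:ℝ) 1, ν (Ioi t) ∂volume
        = ∫⁻ s, volume (Ioc (0:ℝ) 1 ∩ Iio s) ∂(ν.restrict (Ioi 0)) := by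
      have h1 : ∀ᵐ t ∂volume, t ∈ Ioc (0:ℝ) 1 →
          ν (Ioi t) = ∫⁻ s, (Ioi t).indicator 1 s ∂(ν.restrict (Ioi 0)) := by
        refine ae_of_all _ fun t ht => ?_
        rw [lintegral_indicator_one measurableSet_Ioi,
          Measure.restrict_apply' measurableSet_Ioi,
          Set.inter_eq_self_of_subset_left (Ioi_subset_Ioi ht.1.le)]
      rw [setLIntegral_congr_fun_ae measurableSet_Ioc h1]
      have hmeas : AEMeasurable (Function.uncurry (fun t s => (Ioi t).indicator
          (1 : ℝ → ℝ≥0∞) s)) ((volume.restrict (Ioc (0:ℝ) 1)).prod (ν.restrict (Ioi 0))) := by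
        have heq : Function.uncurry (fun t s => (Ioi t).indicator (1 : ℝ → ℝ≥0∞) s)
            = {p : ℝ × ℝ | p.1 < p.2}.indicator 1 := by
          funext p
          rcases p with ⟨t, s⟩
          by_cases h : t < s <;>
            simp [Function.uncurry, Set.indicator, h, mem_Ioi]
        rw [heq]
        exact ((measurable_const.indicator
          (measurableSet_lt measurable_fst measurable_snd))).aemeasurable
      rw [lintegral_lintegral_swap hmeas]
      refine lintegral_congr fun s => ?_
      have h2 : ∀ t : ℝ, (Ioi t).indicator (1 : ℝ → ℝ≥0∞) s = (Iio s).indicator 1 t := by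
        intro t
        by_cases h : t < s <;> simp [Set.indicator, h, mem_Ioi, mem_Iio]
      simp_rw [h2]
      rw [lintegral_indicator_one measurableSet_Iio,
        Measure.restrict_apply' measurableSet_Ioc, Set.inter_comm]
    rw [hswap]
    refine ne_top_of_le_ne_top hν1 (lintegral_mono fun s => ?_)
    calc volume (Ioc (0:ℝ) 1 ∩ Iio s) ≤ volume (Ioc (0:ℝ) (min 1 s)) :=
        measure_mono (fun t ht => ⟨ht.1.1, le_min ht.1.2 ht.2.le⟩)
      _ ≤ ENNReal.ofReal (min 1 s) := by
          rw [Real.volume_Ioc]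
          exact ENNReal.ofReal_le_ofReal (by simp)
  -- integrability of the scalar majorant
  have hgm : Measurable (fun t : ℝ => Real.exp (-(l * t)) * (ν (Ioi t)).toReal) :=
    ((Real.measurable_exp.comp ((measurable_id.const_mul l).neg))).mul hmeasν.ennreal_toReal
  have hg_int : IntegrableOn (fun t : ℝ => Real.exp (-(l * t)) * (ν (Ioi t)).toReal)
      (Ioi 0) volume := by
    refine ⟨hgm.aestronglyMeasurable, ?_⟩
    rw [hasFiniteIntegral_iff_norm]
    have hpt : ∀ t : ℝ, ENNReal.ofReal ‖Real.exp (-(l * t)) * (ν (Ioi t)).toReal‖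
        ≤ ENNReal.ofReal (Real.exp (-(l * t))) * ν (Ioi t) := by
      intro t
      rw [Real.norm_eq_abs, abs_of_nonneg (mul_nonneg (Real.exp_pos _).le ENNReal.toReal_nonneg),
        ENNReal.ofReal_mul (Real.exp_pos _).le]
      exact mul_le_mul_right ENNReal.ofReal_toReal_le _
    have hsplit : Ioc (0:ℝ) 1 ∪ Ioi 1 = Ioi 0 := Ioc_union_Ioi_eq_Ioi zero_le_one
    calc ∫⁻ t in Ioi (0:ℝ), ENNReal.ofReal ‖Real.exp (-(l * t)) * (ν (Ioi t)).toReal‖ ∂volume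
        ≤ ∫⁻ t in Ioi (0:ℝ), ENNReal.ofReal (Real.exp (-(l * t))) * ν (Ioi t) ∂volume :=
          lintegral_mono hpt
      _ = (∫⁻ t in Ioc (0:ℝ) 1, ENNReal.ofReal (Real.exp (-(l * t))) * ν (Ioi t) ∂volume)
          + ∫⁻ t in Ioi (1:ℝ), ENNReal.ofReal (Real.exp (-(l * t))) * ν (Ioi t) ∂volume := by
          rw [← lintegral_union measurableSet_Ioi Ioc_disjoint_Ioi_same, hsplit]
      _ < ⊤ := by
          refine ENNReal.add_lt_top.2 ⟨?_, ?_⟩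
          · refine lt_of_le_of_lt (lintegral_mono_ae
              ((ae_restrict_mem measurableSet_Ioc).mono fun t ht => ?_)) hA.lt_top
            calc ENNReal.ofReal (Real.exp (-(l * t))) * ν (Ioi t)
                ≤ 1 * ν (Ioi t) := by
                  refine mul_le_mul_left ?_ _
                  rw [← ENNReal.ofReal_one]
                  refine ENNReal.ofReal_le_ofReal (Real.exp_le_one_iff.2 ?_)
                  nlinarith [mul_pos hl ht.1]
              _ = ν (Ioi t) := one_mul _
          · refine lt_of_le_of_lt (lintegral_mono_ae ((ae_restrict_mem measurableSet_Ioi).mono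
              fun t ht => mul_le_mul_right (measure_mono (Ioi_subset_Ioi ht.le)) _)) ?_
            have hfm' : Measurable fun t : ℝ => ENNReal.ofReal (Real.exp (-(l * t))) := by
              fun_prop
            rw [lintegral_mul_const _ hfm']
            exact ENNReal.mul_lt_top (sg_exp_fin hl 1) (hνfin 1 one_pos).lt_top
  -- continuity of the orbit through x
  have hCx : Continuous (fun s : ℝ => T (max s 0) x) :=
    (sg_cont T hTsg hTcon hTsc x).comp_continuous (continuous_id.max continuous_const)
      (fun s => mem_Ici.2 (le_max_right _ _))
  -- Part 2 : inner integrability for every h ≥ 0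
  have part2 : ∀ h : ℝ, 0 ≤ h → IntegrableOn
      (fun t : ℝ => (Real.exp (-(l * (h + t))) * (ν (Set.Ioi t)).toReal) • (T (t + h)) x)
      (Set.Ioi 0) volume := by
    intro h hh
    have hms : Measurable (fun t : ℝ => Real.exp (-(l * (h + t))) * (ν (Ioi t)).toReal) :=
      Measurable.mul (by fun_prop) hmeasν.ennreal_toReal
    have hsm : AEStronglyMeasurable
        (fun t : ℝ => (Real.exp (-(l * (h + t))) * (ν (Set.Ioi t)).toReal) • (T (t + h)) x)
        (volume.restrict (Ioi 0)) := by
      have hv : AEStronglyMeasurable (fun t : ℝ => T (max (t + h) 0) x)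
          (volume.restrict (Ioi 0)) :=
        (hCx.comp (continuous_id.add continuous_const)).aestronglyMeasurable
      have hsm0 : AEStronglyMeasurable (fun t : ℝ =>
          (Real.exp (-(l * (h + t))) * (ν (Ioi t)).toReal) • T (max (t + h) 0) x)
          (volume.restrict (Ioi 0)) := hms.aestronglyMeasurable.smul hv
      refine hsm0.congr ?_
      filter_upwards [ae_restrict_mem measurableSet_Ioi] with t ht
      rw [max_eq_left (by linarith [mem_Ioi.1 ht] : (0:ℝ) ≤ t + h)]
    refine Integrable.mono' (hg_int.mul_const ‖x‖) hsm ?_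
    filter_upwards [ae_restrict_mem measurableSet_Ioi] with t ht
    have ht0 : (0:ℝ) < t := ht
    rw [norm_smul, Real.norm_eq_abs,
      abs_of_nonneg (mul_nonneg (Real.exp_pos _).le ENNReal.toReal_nonneg)]
    calc Real.exp (-(l * (h + t))) * (ν (Ioi t)).toReal * ‖T (t + h) x‖
        ≤ Real.exp (-(l * (h + t))) * (ν (Ioi t)).toReal * ‖x‖ := by
          have := hTcon (t + h) (by linarith) x
          have h2 : (0:ℝ) ≤ Real.exp (-(l * (h + t))) * (ν (Ioi t)).toReal :=
            mul_nonneg (Real.exp_pos _).le ENNReal.toReal_nonneg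
          nlinarith
      _ ≤ Real.exp (-(l * t)) * (ν (Ioi t)).toReal * ‖x‖ := by
          have h3 : Real.exp (-(l * (h + t))) ≤ Real.exp (-(l * t)) :=
            Real.exp_le_exp.2 (by nlinarith)
          have h4 : (0:ℝ) ≤ (ν (Ioi t)).toReal * ‖x‖ :=
            mul_nonneg ENNReal.toReal_nonneg (norm_nonneg _)
          nlinarith [ENNReal.toReal_nonneg (a := ν (Ioi t)), norm_nonneg x]
  -- the product kernel
  set σf : ℝ → ℝ → ℝ :=
    fun h s => if h < s then Real.exp (-(l * s)) * (ν (Ioi (s - h))).toReal else 0 with hσf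
  set Φ : ℝ → ℝ → X := fun h s => σf h s • T (max s 0) x with hΦ
  have hσmeas : Measurable (fun p : ℝ × ℝ => σf p.1 p.2) := by
    simp only [hσf]
    refine Measurable.ite (measurableSet_lt measurable_fst measurable_snd) ?_ measurable_const
    exact Measurable.mul (by fun_prop)
      (hmeasν.ennreal_toReal.comp (measurable_snd.sub measurable_fst))
  have hσnn : ∀ h s : ℝ, 0 ≤ σf h s := by
    intro h s
    simp only [hσf]
    split
    · exact mul_nonneg (Real.exp_pos _).le ENNReal.toReal_nonneg
    · exact le_refl 0
  have hΦnorm : ∀ h s : ℝ, ‖Φ h s‖ ≤ σf h s * ‖x‖ := by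
    intro h s
    simp only [hΦ]
    rw [norm_smul, Real.norm_eq_abs, abs_of_nonneg (hσnn h s)]
    exact mul_le_mul_of_nonneg_left (hTcon _ (le_max_right _ _) x) (hσnn h s)
  have hΦasm : AEStronglyMeasurable (fun p : ℝ × ℝ => Φ p.1 p.2)
      ((U.restrict (Ici 0)).prod (volume.restrict (Ioi 0))) := by
    have hv : AEStronglyMeasurable (fun p : ℝ × ℝ => T (max p.2 0) x)
        ((U.restrict (Ici 0)).prod (volume.restrict (Ioi 0))) :=
      (hCx.comp continuous_snd).aestronglyMeasurable
    exact hσmeas.aestronglyMeasurable.smul hv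
  -- product integrability
  have hΦint : Integrable (fun p : ℝ × ℝ => Φ p.1 p.2)
      ((U.restrict (Ici 0)).prod (volume.restrict (Ioi 0))) := by
    refine ⟨hΦasm, ?_⟩
    rw [hasFiniteIntegral_iff_norm]
    have hb1 : ∀ p : ℝ × ℝ, ENNReal.ofReal ‖Φ p.1 p.2‖
        ≤ ENNReal.ofReal (σf p.1 p.2) * ENNReal.ofReal ‖x‖ := fun p => by
      rw [← ENNReal.ofReal_mul (hσnn _ _)]
      exact ENNReal.ofReal_le_ofReal (hΦnorm _ _)
    have hmb : AEMeasurable (fun p : ℝ × ℝ => ENNReal.ofReal (σf p.1 p.2) * ENNReal.ofReal ‖x‖)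
        ((U.restrict (Ici 0)).prod (volume.restrict (Ioi 0))) :=
      (hσmeas.ennreal_ofReal.mul measurable_const).aemeasurable
    have hinner : ∀ s : ℝ, 0 < s →
        (∫⁻ h, ENNReal.ofReal (σf h s) * ENNReal.ofReal ‖x‖ ∂(U.restrict (Ici 0)))
          ≤ ENNReal.ofReal (Real.exp (-(l * s))) * ENNReal.ofReal ‖x‖ := by
      intro s hs
      have hσind : ∀ h : ℝ, ENNReal.ofReal (σf h s) * ENNReal.ofReal ‖x‖
          = (Iio s).indicator (fun h =>
              ENNReal.ofReal (Real.exp (-(l * s)) * (ν (Ioi (s - h))).toReal)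
                * ENNReal.ofReal ‖x‖) h := by
        intro h
        simp only [hσf]
        by_cases hhs : h < s
        · rw [if_pos hhs, Set.indicator_of_mem (mem_Iio.mpr hhs)]
        · rw [if_neg hhs, Set.indicator_of_notMem (by simpa [mem_Iio] using hhs)]
          simp
      have hm2 : Measurable fun h : ℝ => ν (Ioi (s - h)) :=
        hmeasν.comp (measurable_const.sub measurable_id)
      calc ∫⁻ h, ENNReal.ofReal (σf h s) * ENNReal.ofReal ‖x‖ ∂(U.restrict (Ici 0))
          = ∫⁻ h in Iio s, ENNReal.ofReal (Real.exp (-(l * s)) * (ν (Ioi (s - h))).toReal)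
              * ENNReal.ofReal ‖x‖ ∂(U.restrict (Ici 0)) := by
            rw [← lintegral_indicator measurableSet_Iio]
            exact lintegral_congr hσind
        _ ≤ ∫⁻ h in Iio s, (ENNReal.ofReal (Real.exp (-(l * s))) * ν (Ioi (s - h)))
              * ENNReal.ofReal ‖x‖ ∂(U.restrict (Ici 0)) := by
            refine lintegral_mono fun h => mul_le_mul_left ?_ _
            rw [ENNReal.ofReal_mul (Real.exp_pos _).le]
            exact mul_le_mul_right ENNReal.ofReal_toReal_le _
        _ = ENNReal.ofReal (Real.exp (-(l * s)))
              * (∫⁻ h in Iio s, ν (Ioi (s - h)) ∂(U.restrict (Ici 0))) * ENNReal.ofReal ‖x‖ := by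
            rw [lintegral_mul_const _ (hm2.const_mul _), lintegral_const_mul _ hm2]
        _ ≤ ENNReal.ofReal (Real.exp (-(l * s))) * 1 * ENNReal.ofReal ‖x‖ := by
            refine mul_le_mul_left (mul_le_mul_right ?_ _) _
            rw [Measure.restrict_restrict measurableSet_Iio]
            have hset2 : Iio s ∩ Ici 0 = Ico 0 s := by
              ext y
              exact ⟨fun hy => ⟨hy.2, hy.1⟩, fun hy => ⟨hy.2, hy.1⟩⟩
            rw [hset2, ← hrenew s hs]
            exact lintegral_mono_set Ico_subset_Icc_self
        _ = ENNReal.ofReal (Real.exp (-(l * s))) * ENNReal.ofReal ‖x‖ := by rw [mul_one]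
    calc ∫⁻ p, ENNReal.ofReal ‖Φ p.1 p.2‖ ∂((U.restrict (Ici 0)).prod (volume.restrict (Ioi 0)))
        ≤ ∫⁻ p, ENNReal.ofReal (σf p.1 p.2) * ENNReal.ofReal ‖x‖
            ∂((U.restrict (Ici 0)).prod (volume.restrict (Ioi 0))) := lintegral_mono hb1
      _ = ∫⁻ s, ∫⁻ h, ENNReal.ofReal (σf h s) * ENNReal.ofReal ‖x‖
            ∂(U.restrict (Ici 0)) ∂(volume.restrict (Ioi 0)) := lintegral_prod_symm _ hmb
      _ ≤ ∫⁻ s, ENNReal.ofReal (Real.exp (-(l * s))) * ENNReal.ofReal ‖x‖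
            ∂(volume.restrict (Ioi 0)) := by
          refine lintegral_mono_ae ((ae_restrict_mem measurableSet_Ioi).mono fun s hs => ?_)
          exact hinner s hs
      _ < ⊤ := by
          have hfm' : Measurable fun s : ℝ => ENNReal.ofReal (Real.exp (-(l * s))) := by
            fun_prop
          rw [lintegral_mul_const _ hfm']
          exact ENNReal.mul_lt_top (sg_exp_fin hl 0) ENNReal.ofReal_lt_top
  -- rewriting the inner integral
  have hkey : ∀ h : ℝ, 0 ≤ h →
      (∫ t in Ioi (0:ℝ), (Real.exp (-(l * (h + t))) * (ν (Set.Ioi t)).toReal) • (T (t + h)) x)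
        = ∫ s in Ioi (0:ℝ), Φ h s ∂volume := by
    intro h hh
    have e1 : (∫ t in Ioi (0:ℝ),
        (Real.exp (-(l * (h + t))) * (ν (Set.Ioi t)).toReal) • (T (t + h)) x ∂volume)
        = ∫ t in Ioi (0:ℝ), Φ h (t + h) ∂volume := by
      refine setIntegral_congr_fun measurableSet_Ioi fun t ht => ?_
      simp only [hΦ, hσf]
      rw [if_pos (by linarith [mem_Ioi.1 ht] : h < t + h),
        max_eq_left (by linarith [mem_Ioi.1 ht] : (0:ℝ) ≤ t + h),
        show t + h - h = t by ring, show h + t = t + h from add_comm h t]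
    have e2 : (∫ t in Ioi (0:ℝ), Φ h (t + h) ∂volume) = ∫ t, Φ h (t + h) ∂volume := by
      refine setIntegral_eq_integral_of_forall_compl_eq_zero fun t ht => ?_
      have hts : ¬ h < t + h := by
        simp only [mem_Ioi, not_lt] at ht ⊢
        linarith
      simp only [hΦ, hσf]
      rw [if_neg hts, zero_smul]
    have e3 : (∫ t, Φ h (t + h) ∂volume) = ∫ s, Φ h s ∂volume :=
      integral_add_right_eq_self _ h
    have e4 : (∫ s, Φ h s ∂volume) = ∫ s in Ioi (0:ℝ), Φ h s ∂volume := by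
      refine (setIntegral_eq_integral_of_forall_compl_eq_zero fun s hs => ?_).symm
      have hts : ¬ h < s := by
        simp only [mem_Ioi, not_lt] at hs ⊢
        linarith
      simp only [hΦ, hσf]
      rw [if_neg hts, zero_smul]
    rw [e1, e2, e3, e4]
  -- Part 3 : outer integrability
  have part3' : Integrable (fun h : ℝ => ∫ s, Φ h s ∂(volume.restrict (Ioi 0)))
      (U.restrict (Ici 0)) := hΦint.integral_prod_left
  have part3 : IntegrableOn (fun h : ℝ => ∫ t in Set.Ioi (0 : ℝ),
      (Real.exp (-(l * (h + t))) * (ν (Set.Ioi t)).toReal) • (T (t + h)) x)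
      (Set.Ici 0) U := by
    refine part3'.congr ?_
    filter_upwards [ae_restrict_mem measurableSet_Ici] with h hh
    exact (hkey h hh).symm
  -- the resolvent identity
  have hres := sg_resolvent T hT0 hTsg hTcon hTsc u v hu hl
  -- atoms of U are countable
  have hcount : ({s : ℝ | 0 < (U.restrict (Ici 0)) {s}}).Countable := by
    refine Measure.countable_meas_pos_of_disjoint_iUnion₀ (μ := U.restrict (Ici 0))
      (As := fun s : ℝ => {s}) (fun s => (measurableSet_singleton s).nullMeasurableSet) ?_
    exact fun i j hij => (Set.disjoint_singleton.2 hij).aedisjoint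
  have hnull : (volume.restrict (Ioi (0:ℝ))) {s : ℝ | 0 < (U.restrict (Ici 0)) {s}} = 0 :=
    le_antisymm ((Measure.restrict_apply_le _ _).trans_eq (hcount.measure_zero _)) zero_le
  -- the inner U-integral for a.e. s
  have hae : ∀ᵐ s ∂(volume.restrict (Ioi (0:ℝ))),
      (∫ h, Φ h s ∂(U.restrict (Ici 0))) = Real.exp (-(l * s)) • T s x := by
    filter_upwards [ae_restrict_mem measurableSet_Ioi,
      measure_eq_zero_iff_ae_notMem.1 hnull] with s hs hUs
    have hρs : (U.restrict (Ici 0)) {s} = 0 := by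
      by_contra hne
      exact hUs (pos_iff_ne_zero.2 hne)
    have hUs0 : U {s} = 0 := by
      have hsub : ({s} : Set ℝ) ∩ Ici 0 = {s} :=
        Set.inter_eq_self_of_subset_left
          ((singleton_subset_iff (a := s) (s := Ici (0:ℝ))).2 (mem_Ici.2 (le_of_lt hs)))
      rwa [Measure.restrict_apply (measurableSet_singleton s), hsub] at hρs
    have hm2 : Measurable fun h : ℝ => ν (Ioi (s - h)) :=
      hmeasν.comp (measurable_const.sub measurable_id)
    have hη : (∫⁻ h, (Iio s).indicator (fun h => ν (Ioi (s - h))) h ∂(U.restrict (Ici 0))) = 1 := by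
      rw [lintegral_indicator measurableSet_Iio,
        Measure.restrict_restrict measurableSet_Iio]
      have hset2 : Iio s ∩ Ici 0 = Ico 0 s := by
        ext y
        exact ⟨fun hy => ⟨hy.2, hy.1⟩, fun hy => ⟨hy.2, hy.1⟩⟩
      rw [hset2]
      have hsplit := hrenew s hs
      rw [← Ico_union_right (le_of_lt hs), lintegral_union (measurableSet_singleton s)
        (by simp [Set.disjoint_singleton_right])] at hsplit
      have hzz : (∫⁻ h in ({s} : Set ℝ), ν (Ioi (s - h)) ∂U) = 0 := by
        rw [Measure.restrict_eq_zero.2 hUs0, lintegral_zero_measure]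
      rw [hzz, add_zero] at hsplit
      exact hsplit
    have hη2 : (∫ h, ((Iio s).indicator (fun h => ν (Ioi (s - h))) h).toReal
        ∂(U.restrict (Ici 0))) = 1 := by
      rw [integral_toReal ((hm2.indicator measurableSet_Iio).aemeasurable) ?_]
      · rw [hη]
        simp
      · refine ae_of_all _ fun h => ?_
        by_cases hhs : h < s
        · rw [Set.indicator_of_mem (mem_Iio.mpr hhs)]
          exact (hνfin _ (by linarith)).lt_top
        · rw [Set.indicator_of_notMem (by simpa [mem_Iio] using hhs)]
          exact ENNReal.zero_lt_top
    have hσs : (fun h : ℝ => σf h s) = fun h : ℝ =>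
        Real.exp (-(l * s)) * ((Iio s).indicator (fun h => ν (Ioi (s - h))) h).toReal := by
      funext h
      simp only [hσf]
      by_cases hhs : h < s
      · rw [if_pos hhs, Set.indicator_of_mem (mem_Iio.mpr hhs)]
      · rw [if_neg hhs, Set.indicator_of_notMem (by simpa [mem_Iio] using hhs)]
        simp
    calc (∫ h, Φ h s ∂(U.restrict (Ici 0)))
        = (∫ h, σf h s ∂(U.restrict (Ici 0))) • T (max s 0) x := integral_smul_const _ _
      _ = Real.exp (-(l * s)) • T s x := by
          rw [hσs, integral_const_mul, hη2, mul_one, max_eq_left (le_of_lt hs)]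
  -- Part 4 : the identity
  have part4 : (∫ h in Set.Ici (0 : ℝ), (∫ t in Set.Ioi (0 : ℝ),
      (Real.exp (-(l * (h + t))) * (ν (Set.Ioi t)).toReal) • (T (t + h)) x) ∂U) = -u := by
    calc ∫ h in Set.Ici (0 : ℝ), (∫ t in Set.Ioi (0 : ℝ),
          (Real.exp (-(l * (h + t))) * (ν (Set.Ioi t)).toReal) • (T (t + h)) x) ∂U
        = ∫ h, (∫ s, Φ h s ∂(volume.restrict (Ioi 0))) ∂(U.restrict (Ici 0)) := by
          refine integral_congr_ae ?_
          filter_upwards [ae_restrict_mem measurableSet_Ici] with h hh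
          exact hkey h hh
      _ = ∫ s, (∫ h, Φ h s ∂(U.restrict (Ici 0))) ∂(volume.restrict (Ioi 0)) :=
          integral_integral_swap hΦint
      _ = ∫ s in Ioi (0:ℝ), Real.exp (-(l * s)) • T s x ∂volume := integral_congr_ae hae
      _ = -u := hres
  exact ⟨part1, part2, part3, part4⟩
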